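/- Let g : (0,∞) → ℝ be measurable such that t ↦ w(t)|g(t)|^{p−2}g(t) is locally integrable on (0,∞). Then ∫₀^∞ w(t)|g(t)|^{p−2}g(t)·φ'(t) dt = 0 for every smooth function φ : ℝ → ℝ with compact support contained in (0,∞) if and only if there exists a constant a ∈ ℝ such that g(t) = a·w(t)^{1/(1-p)} for a.e. t ∈ (0,∞). (This characterizes the weak solutions of the one-dimensional p-Laplace equation (w|u'|^{p−2}u')' = 0: the p-harmonic functions on the weighted half-line are exactly x ↦ b + a∫₀ˣ w(t)^{1/(1-p)} dt.) -/

import Mathlib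

open MeasureTheory Set

lemma aux_inv (p : ℝ) (hp : 1 < p) {wt s c : ℝ} (hw : 0 < wt)
    (h : wt * |s| ^ (p-2) * s = c) :
    s = (|c| ^ ((2-p)/(p-1)) * c) * wt ^ (1/(1-p)) := by
  have hp1 : p - 1 ≠ 0 := by intro h'; linarith [sub_eq_zero.mp h']
  have hp2 : 1 - p ≠ 0 := by intro h'; apply hp1; linarith
  rcases eq_or_ne s 0 with rfl | hs
  · have : c = 0 := by simpa using h.symm
    simp [this]
  · have hu : 0 < |s| := abs_pos.mpr hs
    have habs : |c| = wt * |s| ^ (p-1) := by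
      rw [← h, abs_mul, abs_mul, abs_of_pos hw,
        abs_of_pos (Real.rpow_pos_of_pos hu _), mul_assoc,
        ← Real.rpow_add_one hu.ne']
      ring_nf
    have e1 : |c| ^ ((2-p)/(p-1)) = wt ^ ((2-p)/(p-1)) * |s| ^ (2-p) := by
      rw [habs, Real.mul_rpow hw.le (Real.rpow_nonneg (abs_nonneg s) _),
        ← Real.rpow_mul (abs_nonneg s)]
      congr 1
      field_simp
    rw [e1, ← h]
    have h1 : |s| ^ (2-p) * |s| ^ (p-2) = 1 := by
      rw [← Real.rpow_add hu]; norm_num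
    have h2 : wt ^ ((2-p)/(p-1)) * (wt * wt ^ (1/(1-p))) = 1 := by
      rw [show wt * wt ^ (1/(1-p)) = wt ^ (1 + 1/(1-p)) by
          rw [Real.rpow_add hw, Real.rpow_one],
        ← Real.rpow_add hw,
        show (2-p)/(p-1) + (1 + 1/(1-p)) = 0 by field_simp; ring,
        Real.rpow_zero]
    symm
    calc wt ^ ((2-p)/(p-1)) * |s|^(2-p) * (wt * |s|^(p-2) * s) * wt^(1/(1-p))
        = (wt ^ ((2-p)/(p-1)) * (wt * wt ^ (1/(1-p)))) * (|s|^(2-p) * |s|^(p-2)) * s := by ring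
      _ = s := by rw [h1, h2]; ring

lemma aux_fwd (p : ℝ) (hp : 1 < p) {wt a : ℝ} (hw : 0 < wt) :
    wt * |a * wt ^ (1/(1-p))| ^ (p-2) * (a * wt ^ (1/(1-p))) = a * |a| ^ (p-2) := by
  have hp2 : 1 - p ≠ 0 := by intro h'; linarith [sub_eq_zero.mp h']
  rcases eq_or_ne a 0 with rfl | ha
  · simp
  · have hu : 0 < wt ^ (1/(1-p)) := Real.rpow_pos_of_pos hw _
    have habs : |a * wt ^ (1/(1-p))| = |a| * wt ^ (1/(1-p)) := by
      rw [abs_mul, abs_of_pos hu]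
    rw [habs, Real.mul_rpow (abs_nonneg a) hu.le, ← Real.rpow_mul hw.le]
    have h2 : wt ^ (1/(1-p) * (p-2)) * wt ^ (1/(1-p)) = wt⁻¹ := by
      rw [← Real.rpow_add hw,
        show 1/(1-p) * (p-2) + 1/(1-p) = -1 by field_simp; ring,
        Real.rpow_neg_one]
    calc wt * (|a| ^ (p-2) * wt ^ (1/(1-p) * (p-2))) * (a * wt ^ (1/(1-p)))
        = (wt * (wt ^ (1/(1-p) * (p-2)) * wt ^ (1/(1-p)))) * (a * |a| ^ (p-2)) := by ring
      _ = a * |a| ^ (p-2) := by rw [h2, mul_inv_cancel₀ hw.ne', one_mul]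

lemma mul_cpt_integrable {F ψ : ℝ → ℝ} (hF : LocallyIntegrableOn F (Ioi 0) volume)
    (hψ : Continuous ψ) (hcpt : HasCompactSupport ψ) (hsupp : tsupport ψ ⊆ Ioi 0) :
    Integrable (fun t => F t * ψ t) volume := by
  have h1 : IntegrableOn F (tsupport ψ) volume :=
    hF.integrableOn_compact_subset hsupp hcpt
  have h2 : IntegrableOn (fun t => F t * ψ t) (tsupport ψ) volume :=
    h1.mul_continuousOn hψ.continuousOn hcpt
  have h3 : Function.support (fun t => F t * ψ t) ⊆ tsupport ψ := by
    intro x hx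
    by_contra hx'
    exact hx (by simp [image_eq_zero_of_notMem_tsupport hx'])
  exact (integrableOn_iff_integrable_of_support_subset h3).mp h2

lemma int_eq {F ψ : ℝ → ℝ} (hsupp : tsupport ψ ⊆ Ioi 0) :
    ∫ t in Ioi (0:ℝ), F t * ψ t = ∫ t, F t * ψ t :=
  setIntegral_eq_integral_of_forall_compl_eq_zero fun x hx => by
    rw [image_eq_zero_of_notMem_tsupport (fun h => hx (hsupp h)), mul_zero]

lemma dbr {F : ℝ → ℝ} (hF : LocallyIntegrableOn F (Ioi 0) volume)
    (h : ∀ φ : ℝ → ℝ, ContDiff ℝ (⊤ : ℕ∞) φ → HasCompactSupport φ →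
        tsupport φ ⊆ Ioi (0 : ℝ) → (∫ t in Ioi (0 : ℝ), F t * deriv φ t) = 0) :
    ∃ c : ℝ, ∀ᵐ t ∂(volume.restrict (Ioi (0:ℝ))), F t = c := by
  -- the bump function
  let ρb : ContDiffBump (1:ℝ) := ⟨1/4, 1/2, by norm_num, by norm_num⟩
  set ρ : ℝ → ℝ := ρb.normed volume with hρ
  have hρ_smooth : ContDiff ℝ (⊤ : ℕ∞) ρ := ρb.contDiff_normed
  have hρ_cpt : HasCompactSupport ρ := ρb.hasCompactSupport_normed
  have hρ_supp : tsupport ρ ⊆ Ioi 0 := by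
    rw [hρ, ρb.tsupport_normed_eq]
    intro x hx
    have := Metric.mem_closedBall.mp hx
    have : |x - 1| ≤ 1/2 := by rw [← Real.dist_eq]; exact this
    have := abs_le.mp this
    simp only [mem_Ioi]; linarith [this.1]
  have hρ_int : ∫ x, ρ x = 1 := ρb.integral_normed
  set c : ℝ := ∫ t in Ioi (0:ℝ), F t * ρ t with hc
  -- step 1: ∫ F ψ = (∫ ψ) * c for all test ψ
  have step1 : ∀ ψ : ℝ → ℝ, ContDiff ℝ (⊤ : ℕ∞) ψ → HasCompactSupport ψ →
      tsupport ψ ⊆ Ioi 0 → ∫ t in Ioi (0:ℝ), F t * ψ t = (∫ t, ψ t) * c := by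
    intro ψ hψs hψc hψsupp
    set lam : ℝ := ∫ t, ψ t with hlam
    set χ : ℝ → ℝ := fun t => ψ t - lam * ρ t with hχ
    have hχ_smooth : ContDiff ℝ (⊤ : ℕ∞) χ := hψs.sub (hρ_smooth.const_smul lam)
    have hχ_cont : Continuous χ := hχ_smooth.continuous
    set K : Set ℝ := tsupport ψ ∪ tsupport ρ with hK
    have hK_cpt : IsCompact K := hψc.union hρ_cpt
    have hK_closed : IsClosed K := hψc.isClosed.union hρ_cpt.isClosed
    have hK_sub : K ⊆ Ioi 0 := union_subset hψsupp hρ_supp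
    have hχ_supp : tsupport χ ⊆ K := by
      apply closure_minimal _ hK_closed
      intro x hx
      by_contra hx'
      simp only [hK, mem_union, not_or] at hx'
      have h1 : ψ x = 0 := image_eq_zero_of_notMem_tsupport hx'.1
      have h2 : ρ x = 0 := image_eq_zero_of_notMem_tsupport hx'.2
      exact hx (by simp [hχ, h1, h2])
    have hχ_cpt : HasCompactSupport χ :=
      HasCompactSupport.of_support_subset_isCompact hK_cpt
        (subset_trans subset_closure hχ_supp)
    -- ∫ χ = 0
    have hψ_int : Integrable ψ volume := hψs.continuous.integrable_of_hasCompactSupport hψc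
    have hρ_int' : Integrable ρ volume := hρ_smooth.continuous.integrable_of_hasCompactSupport hρ_cpt
    have hχ_int0 : ∫ t, χ t = 0 := by
      rw [hχ]
      rw [integral_sub hψ_int (hρ_int'.const_mul lam), integral_const_mul, hρ_int]
      simp [hlam]
    -- the antiderivative
    have hK_ne : K.Nonempty :=
      ⟨1, Or.inr (by rw [hρ, ρb.tsupport_normed_eq]
                     exact Metric.mem_closedBall_self (by norm_num))⟩
    set α : ℝ := sInf K with hα
    set β : ℝ := sSup K with hβ
    have hαK : α ∈ K := hK_cpt.sInf_mem hK_ne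
    have hα_pos : 0 < α := hK_sub hαK
    have hKIcc : K ⊆ Icc α β := fun x hx =>
      ⟨csInf_le hK_cpt.bddBelow hx, le_csSup hK_cpt.bddAbove hx⟩
    set Φ : ℝ → ℝ := fun x => ∫ t in (0:ℝ)..x, χ t with hΦ
    have hχ_ii : ∀ a b : ℝ, IntervalIntegrable χ volume a b := fun a b =>
      hχ_cont.intervalIntegrable a b
    have hΦd : ∀ x, HasDerivAt Φ (χ x) x := fun x =>
      intervalIntegral.integral_hasDerivAt_right (hχ_ii 0 x)
        (hχ_cont.stronglyMeasurable.stronglyMeasurableAtFilter)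
        hχ_cont.continuousAt
    have hΦderiv : deriv Φ = χ := funext fun x => (hΦd x).deriv
    have hΦ_smooth : ContDiff ℝ (⊤ : ℕ∞) Φ :=
      contDiff_infty_iff_deriv.mpr
        ⟨fun x => (hΦd x).differentiableAt, hΦderiv ▸ hχ_smooth⟩
    have hχ_zero : ∀ t, t ∉ Icc α β → χ t = 0 := fun t ht =>
      image_eq_zero_of_notMem_tsupport (fun hmem => ht (hKIcc (hχ_supp hmem)))
    have hΦ_zero : ∀ x, x ∉ Icc α β → Φ x = 0 := by
      intro x hx
      rcases not_and_or.mp (mem_Icc.not.mp hx) with hx' | hx'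
      · push_neg at hx'
        have : EqOn χ 0 (uIcc 0 x) := by
          intro t ht
          apply hχ_zero
          intro htm
          have h1 : t ≤ max 0 x := ht.2
          have : α ≤ t := htm.1
          rcases le_or_gt x 0 with h | h
          · simp only [max_eq_left h] at h1; linarith
          · simp only [max_eq_right h.le] at h1; linarith
        show ∫ t in (0:ℝ)..x, χ t = 0
        rw [intervalIntegral.integral_congr this]; simp
      · push_neg at hx'
        have hαβ : α ≤ β := (hKIcc hαK).2
        have h0x : (0:ℝ) ≤ x := by linarith
        show ∫ t in (0:ℝ)..x, χ t = 0
        rw [intervalIntegral.integral_of_le h0x,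
          setIntegral_eq_integral_of_forall_compl_eq_zero (fun t ht => ?_), hχ_int0]
        apply hχ_zero
        intro htm
        exact ht ⟨lt_of_lt_of_le hα_pos htm.1, by linarith [htm.2]⟩
    have hΦ_supp : tsupport Φ ⊆ Icc α β :=
      closure_minimal (fun x hx => by
        by_contra hx'
        exact hx (hΦ_zero x hx')) isClosed_Icc
    have hΦ_cpt : HasCompactSupport Φ :=
      HasCompactSupport.of_support_subset_isCompact isCompact_Icc
        (subset_trans subset_closure hΦ_supp)
    have hΦ_suppIoi : tsupport Φ ⊆ Ioi 0 := fun t ht =>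
      lt_of_lt_of_le hα_pos (hΦ_supp ht).1
    have h0 := h Φ hΦ_smooth hΦ_cpt hΦ_suppIoi
    rw [hΦderiv] at h0
    have hFψ : Integrable (fun t => F t * ψ t) volume :=
      mul_cpt_integrable hF hψs.continuous hψc hψsupp
    have hFρ : Integrable (fun t => F t * ρ t) volume :=
      mul_cpt_integrable hF hρ_smooth.continuous hρ_cpt hρ_supp
    have hsplit : ∫ t in Ioi (0:ℝ), F t * χ t
        = (∫ t in Ioi (0:ℝ), F t * ψ t) - lam * ∫ t in Ioi (0:ℝ), F t * ρ t := by
      have he : (fun t => F t * χ t) = fun t => F t * ψ t - lam * (F t * ρ t) := by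
        funext t; simp only [hχ]; ring
      rw [he, integral_sub hFψ.integrableOn ((hFρ.integrableOn).const_mul lam),
        integral_const_mul]
    rw [hsplit] at h0
    linarith [h0]
  -- step 2: conclude via the distribution lemma
  refine ⟨c, ?_⟩
  have key : ∀ᵐ x ∂(volume : Measure ℝ), x ∈ Ioi (0:ℝ) → F x - c = 0 := by
    apply isOpen_Ioi.ae_eq_zero_of_integral_contDiff_smul_eq_zero
      (hF.sub (locallyIntegrableOn_const c))
    intro ψ hψs hψc hψsupp
    have hψs' : ContDiff ℝ (⊤ : ℕ∞) ψ := hψs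
    have hψcont := hψs'.continuous
    have hFψ : Integrable (fun t => F t * ψ t) volume :=
      mul_cpt_integrable hF hψcont hψc hψsupp
    have hψ_int : Integrable ψ volume := hψcont.integrable_of_hasCompactSupport hψc
    have e1 : ∫ x, ψ x • (F x - c) = ∫ x in Ioi (0:ℝ), ψ x • (F x - c) :=
      (setIntegral_eq_integral_of_forall_compl_eq_zero fun x hx => by
        rw [image_eq_zero_of_notMem_tsupport (fun h' => hx (hψsupp h')), zero_smul]).symm
    simp only [Pi.sub_apply]
    rw [e1]
    have e2 : ∫ x in Ioi (0:ℝ), ψ x • (F x - c)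
        = (∫ x in Ioi (0:ℝ), F x * ψ x) - c * ∫ x in Ioi (0:ℝ), ψ x := by
      have he : (fun x => ψ x • (F x - c)) = fun x => F x * ψ x - c * ψ x := by
        funext x; simp [smul_eq_mul]; ring
      rw [he, integral_sub hFψ.integrableOn ((hψ_int.integrableOn).const_mul c),
        integral_const_mul]
    rw [e2, step1 ψ hψs' hψc hψsupp,
      show ∫ x in Ioi (0:ℝ), ψ x = ∫ x, ψ x from
        setIntegral_eq_integral_of_forall_compl_eq_zero fun x hx =>
          image_eq_zero_of_notMem_tsupport (fun h' => hx (hψsupp h'))]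
    ring
  rw [show (fun t => F t = c) = fun t => F t = c from rfl]
  have := (ae_restrict_iff' measurableSet_Ioi).mpr key
  filter_upwards [this] with t ht
  linarith [ht]

/-- Weak solutions of the one-dimensional weighted
`p`-Laplace equation `(w |u'|^{p-2} u')' = 0` on `(0,∞)`: a function `g`
(playing the role of `u'`) satisfies the weak equation
`∫₀^∞ w |g|^{p-2} g · φ' dt = 0` for all smooth compactly supported test
functions `φ` with support in `(0,∞)` if and only if
`g = a · w^{1/(1-p)}` a.e. on `(0,∞)` for some constant `a`. -/
theorem stmt_1 (p : ℝ) (hp : 1 < p) (w : ℝ → ℝ)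
    (hw_meas : Measurable w)
    (hw_pos : ∀ᵐ t ∂(volume : Measure ℝ), 0 < w t)
    (hloc : LocallyIntegrableOn (fun t => w t ^ (1 / (1 - p))) (Ici (0 : ℝ)))
    (g : ℝ → ℝ) (hg_meas : Measurable g)
    (hg_loc : LocallyIntegrableOn (fun t => w t * |g t| ^ (p - 2) * g t)
      (Ioi (0 : ℝ))) :
    (∀ φ : ℝ → ℝ, ContDiff ℝ (⊤ : ℕ∞) φ → HasCompactSupport φ →
        tsupport φ ⊆ Ioi (0 : ℝ) →
        (∫ t in Ioi (0 : ℝ), w t * |g t| ^ (p - 2) * g t * deriv φ t) = 0)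
      ↔ (∃ a : ℝ, ∀ᵐ t ∂(volume.restrict (Ioi (0 : ℝ))),
          g t = a * w t ^ (1 / (1 - p))) := by
  constructor
  · intro h
    obtain ⟨c, hc⟩ := dbr hg_loc h
    refine ⟨|c| ^ ((2 - p)/(p - 1)) * c, ?_⟩
    filter_upwards [hc, ae_restrict_of_ae hw_pos] with t h1 h2
    exact aux_inv p hp h2 h1
  · rintro ⟨a, ha⟩ φ hφ hφc hφs
    have key : ∀ᵐ t ∂(volume.restrict (Ioi (0:ℝ))),
        w t * |g t| ^ (p - 2) * g t = a * |a| ^ (p - 2) := by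
      filter_upwards [ha, ae_restrict_of_ae hw_pos] with t h1 h2
      rw [h1]
      exact aux_fwd p hp h2
    have heq : ∫ t in Ioi (0:ℝ), w t * |g t| ^ (p - 2) * g t * deriv φ t
        = ∫ t in Ioi (0:ℝ), (a * |a| ^ (p - 2)) * deriv φ t := by
      apply integral_congr_ae
      filter_upwards [key] with t ht
      rw [ht]
    rw [heq, integral_const_mul,
      HasCompactSupport.integral_Ioi_deriv_eq (hφ.of_le (by exact_mod_cast le_top)) hφc 0,
      show φ 0 = 0 from
        image_eq_zero_of_notMem_tsupport (fun h' => lt_irrefl (0:ℝ) (hφs h'))]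
    simp
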